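/- Let F be a field, p(t) ∈ F[t] a monic irreducible separable polynomial, e ≥ 1 an integer, and E := F[t]/(p(t)). Then there is an F-algebra isomorphism F[t]/(p(t)^e) ≅ E[ε]/(ε^e). More precisely, the natural projection π : F[t]/(p(t)^e) → E admits an F-algebra section s : E → F[t]/(p(t)^e) with π ∘ s = id_E, and for any generator ε of the maximal ideal of F[t]/(p(t)^e) one has F[t]/(p(t)^e) = s(E)[ε]/(ε^e). -/

import Mathlib

open Polynomial

private lemma hensel_aux {F A : Type} [CommRing F] [CommRing A] [Algebra F A]
    (p : F[X]) (hco : IsCoprime p (derivative p)) (c x : A) (e : ℕ)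
    (hc : c ^ e = 0) (hx : Polynomial.aeval x p = c) :
    ∃ y : A, Polynomial.aeval y p = 0 ∧ y - x ∈ Ideal.span {c} := by
  obtain ⟨a, b, hab⟩ := hco
  have heval : ∀ (q : F[X]) (z : A), (q.map (algebraMap F A)).eval z = Polynomial.aeval z q :=
    fun q z => by rw [eval_map, ← aeval_def]
  have key : ∀ n : ℕ, ∃ y : A,
      y - x ∈ Ideal.span {c} ∧ Polynomial.aeval y p ∈ Ideal.span {c ^ 2 ^ n} := by
    intro n
    induction n with
    | zero =>
      exact ⟨x, by simp, by simpa [hx] using Ideal.mem_span_singleton_self c⟩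
    | succ n ih =>
      obtain ⟨y, hy1, hy2⟩ := ih
      obtain ⟨r, hr⟩ := Ideal.mem_span_singleton'.mp hy2
      have h2n : (2 : ℕ) ^ n ≠ 0 := pow_ne_zero _ (by norm_num)
      have hmnil : IsNilpotent (Polynomial.aeval y p) := by
        refine ⟨e, ?_⟩
        rw [← hr, mul_pow, ← pow_mul, mul_comm (2 ^ n) e, pow_mul, hc, zero_pow h2n, mul_zero]
      have hab' : Polynomial.aeval y a * Polynomial.aeval y p
          + Polynomial.aeval y b * Polynomial.aeval y (derivative p) = 1 := by
        have := congrArg (Polynomial.aeval y) hab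
        simpa using this
      have hnil2 : IsNilpotent (Polynomial.aeval y a * Polynomial.aeval y p) :=
        (Commute.all _ _).isNilpotent_mul_left hmnil
      obtain ⟨u, hu⟩ := hnil2.isUnit_one_sub
      set w : A := Polynomial.aeval y b * ↑u⁻¹ with hw
      have hinv : Polynomial.aeval y (derivative p) * w = 1 := by
        have h1 : Polynomial.aeval y b * Polynomial.aeval y (derivative p) = (u : A) := by
          rw [hu]; linear_combination hab'
        rw [hw, ← mul_assoc, mul_comm (Polynomial.aeval y (derivative p)) (Polynomial.aeval y b),
          h1, Units.mul_inv]
      obtain ⟨k, hk⟩ :=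
        Polynomial.binomExpansion (p.map (algebraMap F A)) y (-(Polynomial.aeval y p * w))
      rw [derivative_map, heval p _, heval p y, heval (derivative p) y] at hk
      refine ⟨y + -(Polynomial.aeval y p * w), ?_, ?_⟩
      · rw [Ideal.mem_span_singleton] at hy1 ⊢
        have hcm : c ∣ Polynomial.aeval y p := by
          rw [← hr]; exact (dvd_pow_self c h2n).mul_left r
        have hrew : y + -(Polynomial.aeval y p * w) - x
            = (y - x) + -(Polynomial.aeval y p * w) := by ring
        rw [hrew]
        exact dvd_add hy1 (dvd_neg.mpr (hcm.mul_right w))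
      · rw [Ideal.mem_span_singleton']
        refine ⟨k * w ^ 2 * r ^ 2, ?_⟩
        have h2 : (2 : ℕ) ^ (n + 1) = 2 ^ n * 2 := pow_succ 2 n
        rw [h2, pow_mul]
        linear_combination -hk + (Polynomial.aeval y p) * hinv
          + (k * w ^ 2 * (Polynomial.aeval y p + r * c ^ 2 ^ n)) * hr
  obtain ⟨y, hy1, hy2⟩ := key e
  have hce : c ^ 2 ^ e = 0 := pow_eq_zero_of_le (Nat.lt_two_pow_self (n := e)).le hc
  rw [hce, Ideal.span_singleton_eq_bot.mpr rfl, Ideal.mem_bot] at hy2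
  exact ⟨y, hy2, hy1⟩

theorem adjoinRoot_pow_structure
    (F : Type) [Field F] (p : Polynomial F)
    (hmonic : p.Monic) (hirr : Irreducible p) (hsep : p.Separable)
    (e : ℕ) (he : 1 ≤ e) :
    Nonempty (AdjoinRoot (p ^ e) ≃ₐ[F]
        (Polynomial (AdjoinRoot p) ⧸
          Ideal.span {(Polynomial.X : Polynomial (AdjoinRoot p)) ^ e})) ∧
    ∃ s : AdjoinRoot p →ₐ[F] AdjoinRoot (p ^ e),
      (AdjoinRoot.liftAlgHom (p ^ e) (Algebra.ofId F (AdjoinRoot p)) (AdjoinRoot.root p)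
          (by
            change Polynomial.aeval (AdjoinRoot.root p) (p ^ e) = 0
            rw [map_pow, AdjoinRoot.aeval_eq, AdjoinRoot.mk_self]
            exact zero_pow (by omega))).comp s = AlgHom.id F (AdjoinRoot p) ∧
      ∀ ε : AdjoinRoot (p ^ e),
        Ideal.span {ε} = Ideal.span {AdjoinRoot.mk (p ^ e) p} →
          ε ^ e = 0 ∧ Algebra.adjoin F (insert ε (Set.range s)) = ⊤ := by
  haveI := Fact.mk hirr
  have hce : (AdjoinRoot.mk (p ^ e) p) ^ e = 0 := by
    rw [← map_pow, AdjoinRoot.mk_self]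
  set c : AdjoinRoot (p ^ e) := AdjoinRoot.mk (p ^ e) p with hcdef
  obtain ⟨y, hy, hyx⟩ :=
    hensel_aux p hsep c (AdjoinRoot.root (p ^ e)) e hce (AdjoinRoot.aeval_eq p)
  set s : AdjoinRoot p →ₐ[F] AdjoinRoot (p ^ e) := AdjoinRoot.liftAlgHom p (Algebra.ofId F _) y
    (by rw [Algebra.toRingHom_ofId, ← Polynomial.aeval_def]; exact hy) with hsdef
  have hproof : Polynomial.aeval (AdjoinRoot.root p) (p ^ e) = 0 := by
    rw [map_pow, AdjoinRoot.aeval_eq, AdjoinRoot.mk_self]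
    exact zero_pow (by omega)
  set π : AdjoinRoot (p ^ e) →ₐ[F] AdjoinRoot p :=
    AdjoinRoot.liftAlgHom (p ^ e) (Algebra.ofId F _) (AdjoinRoot.root p)
      (by rw [Algebra.toRingHom_ofId, ← Polynomial.aeval_def]; exact hproof) with hπdef
  have hπmk : ∀ q : Polynomial F, π (AdjoinRoot.mk (p ^ e) q) = AdjoinRoot.mk p q := fun q => by
    rw [hπdef, AdjoinRoot.liftAlgHom_mk]; exact AdjoinRoot.aeval_eq q
  have hπc : π c = 0 := by rw [hcdef, hπmk, AdjoinRoot.mk_self]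
  have hπker : ∀ z, π z = 0 → z ∈ Ideal.span {c} := by
    intro z hz
    obtain ⟨q, rfl⟩ := AdjoinRoot.mk_surjective z
    rw [hπmk] at hz
    obtain ⟨t, rfl⟩ := (AdjoinRoot.mk_eq_zero).mp hz
    rw [Ideal.mem_span_singleton, map_mul]
    exact Dvd.intro _ rfl
  have hsy : s (AdjoinRoot.root p) = y := by rw [hsdef, AdjoinRoot.liftAlgHom_root]
  have hπy : π y = AdjoinRoot.root p := by
    obtain ⟨d, hd⟩ := Ideal.mem_span_singleton'.mp hyx
    have hyr : y = AdjoinRoot.root (p ^ e) + d * c := by linear_combination -hd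
    rw [hyr, map_add, map_mul, hπc, mul_zero, add_zero, hπdef, AdjoinRoot.liftAlgHom_root]
  have hsec : π.comp s = AlgHom.id F (AdjoinRoot p) := by
    apply AdjoinRoot.algHom_ext
    simp [AlgHom.comp_apply, hsy, hπy]
  have hπs : ∀ z, π (s z) = z := fun z => by
    have := AlgHom.congr_fun hsec z
    simpa using this
  have hmain : ∀ ε : AdjoinRoot (p ^ e), Ideal.span {ε} = Ideal.span {c} →
      ε ^ e = 0 ∧ Algebra.adjoin F (insert ε (Set.range ⇑s)) = ⊤ := by
    intro ε hε
    have hcε : c ∣ ε := Ideal.mem_span_singleton.mp (hε ▸ Ideal.mem_span_singleton_self ε)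
    obtain ⟨d, hd⟩ := hcε
    have hεe : ε ^ e = 0 := by rw [hd, mul_pow, hce, zero_mul]
    refine ⟨hεe, ?_⟩
    set S := Algebra.adjoin F (insert ε (Set.range ⇑s)) with hS
    have hεS : ε ∈ S := Algebra.subset_adjoin (Set.mem_insert _ _)
    have hsS : ∀ z, s z ∈ S := fun z => Algebra.subset_adjoin (Set.mem_insert_of_mem _ ⟨z, rfl⟩)
    have hdecomp : ∀ a1 : AdjoinRoot (p ^ e), ∃ d1, a1 = s (π a1) + ε * d1 := by
      intro a1
      have h0 : π (a1 - s (π a1)) = 0 := by rw [map_sub, hπs, sub_self]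
      have hmem := hπker _ h0
      rw [← hε, Ideal.mem_span_singleton] at hmem
      obtain ⟨d1, hd1⟩ := hmem
      exact ⟨d1, by linear_combination hd1⟩
    have hQ : ∀ j : ℕ, ∀ a1, ε ^ (e - j) * a1 ∈ S := by
      intro j
      induction j with
      | zero => intro a1; rw [Nat.sub_zero, hεe, zero_mul]; exact zero_mem _
      | succ j ih =>
        intro a1
        rcases Nat.lt_or_ge j e with hj | hj
        · obtain ⟨d1, hd1⟩ := hdecomp a1
          have hee : e - j = (e - (j + 1)) + 1 := by omega
          have hre : ε ^ (e - (j + 1)) * a1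
              = ε ^ (e - (j + 1)) * s (π a1) + ε ^ (e - j) * d1 := by
            conv_lhs => rw [hd1]
            rw [hee, pow_succ]; ring
          rw [hre]
          exact add_mem (mul_mem (pow_mem hεS _) (hsS _)) (ih d1)
        · have hee : e - (j + 1) = e - j := by omega
          rw [hee]; exact ih a1
    rw [eq_top_iff]
    intro a1 _
    simpa using hQ e a1
  have htop := (hmain c rfl).2
  -- the isomorphism
  letI : Algebra (AdjoinRoot p) (AdjoinRoot (p ^ e)) := s.toRingHom.toAlgebra
  haveI : IsScalarTower F (AdjoinRoot p) (AdjoinRoot (p ^ e)) :=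
    IsScalarTower.of_algebraMap_eq fun z => (s.commutes z).symm
  have hXe : Polynomial.aeval c ((Polynomial.X : Polynomial (AdjoinRoot p)) ^ e) = 0 := by
    rw [map_pow, Polynomial.aeval_X]; exact hce
  set Φ : AdjoinRoot ((Polynomial.X : Polynomial (AdjoinRoot p)) ^ e)
      →ₐ[AdjoinRoot p] AdjoinRoot (p ^ e) :=
    AdjoinRoot.liftAlgHom _ (Algebra.ofId (AdjoinRoot p) _) c
      (by rw [Algebra.toRingHom_ofId, ← Polynomial.aeval_def]; exact hXe) with hΦdef
  set ΦF := Φ.restrictScalars F with hΦF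
  have hsurj : Function.Surjective ΦF := by
    rw [← AlgHom.range_eq_top, eq_top_iff, ← htop]
    apply Algebra.adjoin_le
    intro z hz
    rcases Set.mem_insert_iff.mp hz with rfl | ⟨w0, rfl⟩
    · refine ⟨AdjoinRoot.root _, ?_⟩
      show Φ (AdjoinRoot.root _) = c
      rw [hΦdef, AdjoinRoot.liftAlgHom_root]
    · refine ⟨AdjoinRoot.mk _ (Polynomial.C w0), ?_⟩
      show Φ (AdjoinRoot.mk _ (Polynomial.C w0)) = s w0
      rw [hΦdef, AdjoinRoot.liftAlgHom_mk, Polynomial.eval₂_C]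
      rfl
  let pbA := AdjoinRoot.powerBasis' (hmonic.pow (n := e))
  let pbE := AdjoinRoot.powerBasis' hmonic
  let pbQ := AdjoinRoot.powerBasis' ((Polynomial.monic_X (R := AdjoinRoot p)).pow (n := e))
  haveI : FiniteDimensional F (AdjoinRoot (p ^ e)) := pbA.finite
  haveI : FiniteDimensional F (AdjoinRoot p) := pbE.finite
  haveI : Module.Finite (AdjoinRoot p)
      (AdjoinRoot ((Polynomial.X : Polynomial (AdjoinRoot p)) ^ e)) := pbQ.finite
  haveI : FiniteDimensional F (AdjoinRoot ((Polynomial.X : Polynomial (AdjoinRoot p)) ^ e)) :=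
    Module.Finite.trans (AdjoinRoot p) _
  have hdim : Module.finrank F (AdjoinRoot ((Polynomial.X : Polynomial (AdjoinRoot p)) ^ e))
      = Module.finrank F (AdjoinRoot (p ^ e)) := by
    rw [pbA.finrank, ← Module.finrank_mul_finrank F (AdjoinRoot p)
      (AdjoinRoot ((Polynomial.X : Polynomial (AdjoinRoot p)) ^ e)),
      pbE.finrank, pbQ.finrank]
    show p.natDegree * ((Polynomial.X : Polynomial (AdjoinRoot p)) ^ e).natDegree
      = (p ^ e).natDegree
    rw [Polynomial.natDegree_pow, Polynomial.natDegree_pow, Polynomial.natDegree_X, mul_one,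
      mul_comm]
  have hinj : Function.Injective ΦF := by
    have := (LinearMap.injective_iff_surjective_of_finrank_eq_finrank (K := F) hdim
      (f := ΦF.toLinearMap)).mpr hsurj
    exact this
  refine ⟨⟨(AlgEquiv.ofBijective ΦF ⟨hinj, hsurj⟩).symm⟩, s, ?_, hmain⟩
  exact hsec
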